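/- Let G be a non-trivial group with trivial center. If T(G) = NHol(G)/Hol(G) is not cyclic of order 2, then there exist non-trivial proper characteristic subgroups K₁, K₂ of G and centerless normal subgroups Q₁, Q₂ of Aut(G) such that: K₁ ∩ K₂ = 1 and [G,G] ⊆ K₁K₂; Q₁ ∩ Q₂ = 1, Inn(G) ⊆ Q₁Q₂, and Q₁·Inn(G) = Q₂·Inn(G); and G/K₁ ≅ Q₁ and G/K₂ ≅ Q₂. -/

import Mathlib

/-- The left regular representation `λ : G →* Perm G`, `λ(σ)(x) = σ·x`. -/
def lambda (G : Type*) [Group G] : G →* Equiv.Perm G where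
  toFun σ := Equiv.mulLeft σ
  map_one' := by ext x; simp
  map_mul' σ τ := by ext x; simp [mul_assoc]

/-- The right regular representation `ρ : G →* Perm G`, `ρ(σ)(x) = x·σ⁻¹`. -/
def rho (G : Type*) [Group G] : G →* Equiv.Perm G where
  toFun σ := Equiv.mulRight σ⁻¹
  map_one' := by ext x; simp
  map_mul' σ τ := by ext x; simp [mul_assoc]

/-- The holomorph `Hol(G)`: the normalizer of `λ(G)` in `Perm G`. -/
def Hol (G : Type*) [Group G] : Subgroup (Equiv.Perm G) :=
  Subgroup.normalizer (((lambda G).range : Subgroup (Equiv.Perm G)) : Set (Equiv.Perm G))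

/-- The multiple holomorph `NHol(G)`: the normalizer of `Hol(G)` in `Perm G`. -/
def NHol (G : Type*) [Group G] : Subgroup (Equiv.Perm G) :=
  Subgroup.normalizer ((Hol G : Subgroup (Equiv.Perm G)) : Set (Equiv.Perm G))

instance holNormalInNHol (G : Type*) [Group G] :
    ((Hol G).subgroupOf (NHol G)).Normal :=
  Subgroup.normal_in_normalizer

/-- `T(G) = NHol(G) / Hol(G)`. -/
def THol (G : Type*) [Group G] : Type _ :=
  NHol G ⧸ (Hol G).subgroupOf (NHol G)

noncomputable instance (G : Type*) [Group G] : Group (THol G) :=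
  QuotientGroup.Quotient.group _

set_option linter.unusedTactic false

open scoped commutatorElement

theorem Equiv.Perm.apply_inv_self {α : Type*} (f : Equiv.Perm α) (x : α) : f (f⁻¹ x) = x :=
  f.apply_symm_apply x

theorem Equiv.Perm.inv_apply_self {α : Type*} (f : Equiv.Perm α) (x : α) : f⁻¹ (f x) = x :=
  f.symm_apply_apply x

section Aux

variable {G : Type*} [Group G]

@[simp] lemma lambda_apply (g x : G) : lambda G g x = g * x := rfl
@[simp] lemma rho_apply (g x : G) : rho G g x = x * g⁻¹ := rfl

lemma lambda_injective : Function.Injective (lambda G) := fun a b h => by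
  have := congrArg (fun p : Equiv.Perm G => p 1) h
  simpa using this

lemma rho_injective : Function.Injective (rho G) := fun a b h => by
  have := congrArg (fun p : Equiv.Perm G => p 1) h
  simp at this
  exact this

lemma lambda_mem_Hol (g : G) : lambda G g ∈ Hol G :=
  Subgroup.le_normalizer (H := (lambda G).range) ⟨g, rfl⟩

/-- Key behavior of elements of the holomorph. -/
lemma hol_smul (f : Equiv.Perm G) (hf : f ∈ Hol G) (g y : G) :
    f (g * y) = f (g * f⁻¹ 1) * f y := by
  obtain ⟨g', hg'⟩ := (Subgroup.mem_normalizer_iff (H := (lambda G).range).mp hf (lambda G g)).mp ⟨g, rfl⟩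
  have e1 : ∀ x, g' * x = f (g * f⁻¹ x) := fun x => by
    have := congrArg (fun p : Equiv.Perm G => p x) hg'
    simpa [Equiv.Perm.mul_apply] using this
  have eA := e1 1
  have eB := e1 (f y)
  rw [mul_one] at eA
  rw [Equiv.Perm.inv_apply_self] at eB
  rw [← eB, ← eA]

/-- The automorphism of `G` induced by conjugation by `f ∈ Hol G` on `λ(G)`. -/
noncomputable def holAutFun (f : ↥(Hol G)) : MulAut G where
  toFun g := (f : Equiv.Perm G) (g * (f : Equiv.Perm G)⁻¹ 1)
  invFun g := (f : Equiv.Perm G)⁻¹ (g * (f : Equiv.Perm G) 1)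
  left_inv g := by
    show (f : Equiv.Perm G)⁻¹
      ((f : Equiv.Perm G) (g * (f : Equiv.Perm G)⁻¹ 1) * (f : Equiv.Perm G) 1) = g
    have h := hol_smul (f : Equiv.Perm G) f.2 g 1
    rw [mul_one] at h
    rw [← h, Equiv.Perm.inv_apply_self]
  right_inv g := by
    show (f : Equiv.Perm G)
      ((f : Equiv.Perm G)⁻¹ (g * (f : Equiv.Perm G) 1) * (f : Equiv.Perm G)⁻¹ 1) = g
    have h := hol_smul (f : Equiv.Perm G) f.2 ((f : Equiv.Perm G)⁻¹ (g * (f : Equiv.Perm G) 1)) 1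
    rw [mul_one, Equiv.Perm.apply_inv_self] at h
    exact mul_right_cancel h.symm
  map_mul' a b := by
    have h := hol_smul (f : Equiv.Perm G) f.2 a (b * (f : Equiv.Perm G)⁻¹ 1)
    simp only [← mul_assoc] at h
    exact h

@[simp] lemma holAutFun_apply (f : ↥(Hol G)) (g : G) :
    holAutFun f g = (f : Equiv.Perm G) (g * (f : Equiv.Perm G)⁻¹ 1) := rfl

lemma holAutFun_spec (f : ↥(Hol G)) (g y : G) :
    (f : Equiv.Perm G) (g * y) = holAutFun f g * (f : Equiv.Perm G) y :=
  hol_smul (f : Equiv.Perm G) f.2 g y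

lemma holAutFun_eval (f : ↥(Hol G)) (g : G) :
    (f : Equiv.Perm G) g = holAutFun f g * (f : Equiv.Perm G) 1 := by
  have := holAutFun_spec f g 1
  rwa [mul_one] at this

/-- `holA : Hol G →* Aut G`, conjugation action on `λ(G)`. -/
noncomputable def holA : ↥(Hol G) →* MulAut G where
  toFun := holAutFun
  map_one' := by ext g; simp
  map_mul' f h := by
    ext g
    show holAutFun (f * h) g = holAutFun f (holAutFun h g)
    have key := holAutFun_spec h g ((h : Equiv.Perm G)⁻¹ ((f : Equiv.Perm G)⁻¹ 1))
    simp only [holAutFun_apply, Subgroup.coe_mul, Equiv.Perm.mul_apply, mul_inv_rev]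
    rw [key, Equiv.Perm.apply_inv_self]; rfl

@[simp] lemma holA_apply (f : ↥(Hol G)) (g : G) :
    holA f g = (f : Equiv.Perm G) (g * (f : Equiv.Perm G)⁻¹ 1) := rfl

lemma holA_spec (f : ↥(Hol G)) (g y : G) :
    (f : Equiv.Perm G) (g * y) = holA f g * (f : Equiv.Perm G) y :=
  holAutFun_spec f g y

lemma holA_eval (f : ↥(Hol G)) (g : G) :
    (f : Equiv.Perm G) g = holA f g * (f : Equiv.Perm G) 1 :=
  holAutFun_eval f g

lemma holA_conj (f : ↥(Hol G)) (g : G) :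
    (f : Equiv.Perm G) * lambda G g * (f : Equiv.Perm G)⁻¹ = lambda G (holA f g) := by
  ext x
  simp only [Equiv.Perm.mul_apply, lambda_apply]
  have := holA_spec f g ((f : Equiv.Perm G)⁻¹ x)
  rw [this, Equiv.Perm.apply_inv_self]

lemma lambda_rho_comm (g s : G) : lambda G g * rho G s = rho G s * lambda G g := by
  ext x; simp [mul_assoc]

lemma rho_mem_Hol (s : G) : rho G s ∈ Hol G := by
  show rho G s ∈ Subgroup.normalizer (((lambda G).range : Subgroup (Equiv.Perm G)) : Set (Equiv.Perm G))
  rw [Subgroup.mem_normalizer_iff]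
  intro p
  constructor
  · rintro ⟨g, rfl⟩
    refine ⟨g, ?_⟩
    rw [← lambda_rho_comm]
    group
  · rintro ⟨g, hg⟩
    refine ⟨g, ?_⟩
    have : lambda G g = rho G s * lambda G g * (rho G s)⁻¹ := by
      rw [← lambda_rho_comm]; group
    rw [this] at hg
    have := mul_left_cancel (mul_right_cancel hg)
    exact this

/-- The conjugation action of `Hol G` on `ρ(G)`, valued in `Aut G`. -/
noncomputable def holBFun (f : ↥(Hol G)) : MulAut G :=
  MulAut.conj (((f : Equiv.Perm G) 1)⁻¹) * holA f

lemma holBFun_apply (f : ↥(Hol G)) (s : G) :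
    holBFun f s = ((f : Equiv.Perm G) 1)⁻¹ * holA f s * (f : Equiv.Perm G) 1 := by
  simp [holBFun, MulAut.conj_apply]

lemma holBFun_conj (f : ↥(Hol G)) (s : G) :
    (f : Equiv.Perm G) * rho G s * (f : Equiv.Perm G)⁻¹ = rho G (holBFun f s) := by
  ext x
  simp only [Equiv.Perm.mul_apply, rho_apply]
  have h1 : (f : Equiv.Perm G) ((f : Equiv.Perm G)⁻¹ x * s⁻¹)
      = holA f ((f : Equiv.Perm G)⁻¹ x) * (f : Equiv.Perm G) s⁻¹ :=
    holA_spec f _ _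
  have h2 : holA f ((f : Equiv.Perm G)⁻¹ x) = x * ((f : Equiv.Perm G) 1)⁻¹ := by
    have := holA_eval f ((f : Equiv.Perm G)⁻¹ x)
    rw [Equiv.Perm.apply_inv_self] at this
    exact eq_mul_inv_of_mul_eq this.symm
  have h3 : (f : Equiv.Perm G) s⁻¹ = (holA f s)⁻¹ * (f : Equiv.Perm G) 1 := by
    have := holA_eval f s⁻¹
    rw [this, map_inv]
  rw [h1, h2, h3, holBFun_apply]
  group

lemma holBFun_mul (f h : ↥(Hol G)) : holBFun (f * h) = holBFun f * holBFun h := by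
  ext s
  apply rho_injective (G := G)
  show rho G _ = rho G _
  rw [← holBFun_conj (f * h) s]
  have : holBFun f (holBFun h s) = (holBFun f * holBFun h) s := rfl
  rw [← this, ← holBFun_conj f (holBFun h s), ← holBFun_conj h s]
  simp only [Subgroup.coe_mul]
  group

/-- `holB : Hol G →* Aut G`, conjugation action on `ρ(G)`. -/
noncomputable def holB : ↥(Hol G) →* MulAut G where
  toFun := holBFun
  map_one' := by ext s; simp [holBFun_apply]
  map_mul' := holBFun_mul

lemma holB_apply (f : ↥(Hol G)) (s : G) :
    holB f s = ((f : Equiv.Perm G) 1)⁻¹ * holA f s * (f : Equiv.Perm G) 1 :=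
  holBFun_apply f s

lemma holB_conj (f : ↥(Hol G)) (s : G) :
    (f : Equiv.Perm G) * rho G s * (f : Equiv.Perm G)⁻¹ = rho G (holB f s) :=
  holBFun_conj f s

lemma holA_eq_conj_mul_holB (f : ↥(Hol G)) :
    holA f = MulAut.conj ((f : Equiv.Perm G) 1) * holB f := by
  ext s
  show holA f s = MulAut.conj ((f : Equiv.Perm G) 1) (holB f s)
  rw [holB_apply, MulAut.conj_apply]
  group

lemma holA_eq_one_iff (f : ↥(Hol G)) :
    holA f = 1 ↔ (f : Equiv.Perm G) ∈ (rho G).range := by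
  constructor
  · intro h1
    refine ⟨((f : Equiv.Perm G) 1)⁻¹, ?_⟩
    ext x
    have hx : holA f x = x := by rw [h1]; rfl
    have := holA_eval f x
    rw [hx] at this
    simp [this, ← map_inv]
  · rintro ⟨s, hs⟩
    ext g
    show holA f g = g
    have hinv : ((rho G s))⁻¹ = rho G s⁻¹ := (map_inv (rho G) s).symm
    rw [holA_apply, ← hs, hinv]
    simp only [rho_apply]
    group

lemma holB_eq_one_iff (f : ↥(Hol G)) :
    holB f = 1 ↔ (f : Equiv.Perm G) ∈ (lambda G).range := by
  constructor
  · intro h1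
    refine ⟨(f : Equiv.Perm G) 1, ?_⟩
    ext x
    have hc := holB_conj f x⁻¹
    have hx : holB f x⁻¹ = x⁻¹ := by rw [h1]; rfl
    rw [hx] at hc
    have := congrArg (fun p : Equiv.Perm G => p ((f : Equiv.Perm G) 1)) hc
    simp only [Equiv.Perm.mul_apply, rho_apply, inv_inv, Equiv.Perm.inv_apply_self] at this
    simpa using this.symm
  · rintro ⟨g, hs⟩
    ext s
    show holB f s = s
    have h1 : (f : Equiv.Perm G) 1 = g := by rw [← hs]; simp
    have h2 : holA f s = g * s * g⁻¹ := by
      have hinv : ((lambda G g))⁻¹ = lambda G g⁻¹ := (map_inv (lambda G) g).symm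
      rw [holA_apply, ← hs, hinv]
      simp only [lambda_apply]
      group
    rw [holB_apply, h1, h2]
    group

lemma toPerm_conj_lambda (φ : MulAut G) (g : G) :
    MulAut.toPerm G φ * lambda G g * (MulAut.toPerm G φ)⁻¹ = lambda G (φ g) := by
  ext x
  simp only [Equiv.Perm.mul_apply, lambda_apply, MulAut.toPerm]
  show φ (g * φ.toEquiv⁻¹ x) = φ g * x
  rw [map_mul]
  congr 1
  exact φ.toEquiv.apply_symm_apply x

lemma toPerm_mem_Hol (φ : MulAut G) : MulAut.toPerm G φ ∈ Hol G := by
  show MulAut.toPerm G φ ∈ Subgroup.normalizer (((lambda G).range : Subgroup (Equiv.Perm G)) : Set (Equiv.Perm G))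
  rw [Subgroup.mem_normalizer_iff]
  intro p
  constructor
  · rintro ⟨g, rfl⟩
    exact ⟨φ g, (toPerm_conj_lambda φ g).symm⟩
  · rintro ⟨g, hg⟩
    refine ⟨φ⁻¹ g, ?_⟩
    have := toPerm_conj_lambda φ (φ⁻¹ g)
    have hφ : φ (φ⁻¹ g) = g := by simp
    rw [hφ] at this
    have h2 := this.trans hg
    exact mul_left_cancel (mul_right_cancel h2)

lemma holA_toPerm (φ : MulAut G) :
    holA (⟨MulAut.toPerm G φ, toPerm_mem_Hol φ⟩ : ↥(Hol G)) = φ := by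
  ext g
  show MulAut.toPerm G φ (g * (MulAut.toPerm G φ)⁻¹ 1) = φ g
  have h1 : (MulAut.toPerm G φ)⁻¹ (1 : G) = 1 := by
    rw [← map_inv (MulAut.toPerm G) φ]
    show φ⁻¹ (1 : G) = 1
    exact map_one _
  rw [h1, mul_one]
  rfl

lemma holB_toPerm (φ : MulAut G) :
    holB (⟨MulAut.toPerm G φ, toPerm_mem_Hol φ⟩ : ↥(Hol G)) = φ := by
  have h1 : (MulAut.toPerm G φ) (1 : G) = 1 := map_one φ
  ext s
  rw [holB_apply]
  show ((MulAut.toPerm G φ) (1:G))⁻¹ * _ * (MulAut.toPerm G φ) (1:G) = _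
  rw [h1, holA_toPerm]
  group

/-- The inversion permutation. -/
def invPerm (G : Type*) [Group G] : Equiv.Perm G :=
  ⟨fun x => x⁻¹, fun x => x⁻¹, fun x => inv_inv x, fun x => inv_inv x⟩

@[simp] lemma invPerm_apply (x : G) : invPerm G x = x⁻¹ := rfl

@[simp] lemma invPerm_inv : (invPerm G)⁻¹ = invPerm G := by
  have : invPerm G * invPerm G = 1 := by ext x; simp
  exact inv_eq_of_mul_eq_one_right this

lemma invPerm_conj_lambda (g : G) :
    invPerm G * lambda G g * (invPerm G)⁻¹ = rho G g := by
  ext x; simp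

lemma invPerm_conj_rho (g : G) :
    invPerm G * rho G g * (invPerm G)⁻¹ = lambda G g := by
  ext x; simp

lemma invPerm_conj_Hol (f : Equiv.Perm G) (hf : f ∈ Hol G) :
    invPerm G * f * (invPerm G)⁻¹ ∈ Hol G := by
  show _ ∈ Subgroup.normalizer (((lambda G).range : Subgroup (Equiv.Perm G)) : Set (Equiv.Perm G))
  rw [Subgroup.mem_normalizer_iff]
  have key : ∀ (h : Equiv.Perm G) (hh : h ∈ Hol G) (g : G),
      (invPerm G * h * (invPerm G)⁻¹) * lambda G g * (invPerm G * h * (invPerm G)⁻¹)⁻¹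
        = lambda G (holB ⟨h, hh⟩ g) := by
    intro h hh g
    have e1 : (invPerm G)⁻¹ * lambda G g * invPerm G = rho G g := by
      rw [invPerm_inv, ← invPerm_conj_lambda g, invPerm_inv]
    have e2 := holB_conj (⟨h, hh⟩ : ↥(Hol G)) g
    have e3 := invPerm_conj_rho (holB ⟨h, hh⟩ g)
    calc (invPerm G * h * (invPerm G)⁻¹) * lambda G g * (invPerm G * h * (invPerm G)⁻¹)⁻¹
        = invPerm G * (h * ((invPerm G)⁻¹ * lambda G g * invPerm G) * h⁻¹) * (invPerm G)⁻¹ := by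
          group
      _ = invPerm G * (h * rho G g * h⁻¹) * (invPerm G)⁻¹ := by rw [e1]
      _ = invPerm G * rho G (holB ⟨h, hh⟩ g) * (invPerm G)⁻¹ := by
          rw [← e2]
      _ = lambda G (holB ⟨h, hh⟩ g) := e3
  intro p
  constructor
  · rintro ⟨g, rfl⟩
    exact ⟨holB ⟨f, hf⟩ g, (key f hf g).symm⟩
  · rintro ⟨g, hg⟩
    -- p is conjugate of lambda g' for g' with holB f g' = g
    obtain ⟨g', hg'⟩ : ∃ g', holB (⟨f, hf⟩ : ↥(Hol G)) g' = g := ⟨(holB ⟨f, hf⟩)⁻¹ g, by simp⟩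
    have h2 := key f hf g'
    rw [hg'] at h2
    have h3 := h2.trans hg
    refine ⟨g', ?_⟩
    exact mul_left_cancel (mul_right_cancel h3)

lemma invPerm_mem_NHol : invPerm G ∈ NHol G := by
  show _ ∈ Subgroup.normalizer ((Hol G : Subgroup (Equiv.Perm G)) : Set (Equiv.Perm G))
  rw [Subgroup.mem_normalizer_iff]
  intro f
  constructor
  · intro hf; exact invPerm_conj_Hol f hf
  · intro hf
    have := invPerm_conj_Hol _ hf
    have e : invPerm G * (invPerm G * f * (invPerm G)⁻¹) * (invPerm G)⁻¹ = f := by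
      rw [invPerm_inv]
      calc invPerm G * (invPerm G * f * invPerm G) * invPerm G
          = (invPerm G * invPerm G) * f * (invPerm G * invPerm G) := by group
        _ = f := by
            have h1 : invPerm G * invPerm G = 1 := by ext x; simp
            rw [h1]; group
    rwa [e] at this

lemma invPerm_not_mem_Hol [Nontrivial G] (hZ : Subgroup.center G = ⊥) :
    invPerm G ∉ Hol G := by
  intro hf
  obtain ⟨g, hg⟩ := exists_ne (1 : G)
  have h1 : invPerm G * lambda G g * (invPerm G)⁻¹ ∈ (lambda G).range :=
    (Subgroup.mem_normalizer_iff (H := (lambda G).range).mp hf (lambda G g)).mp ⟨g, rfl⟩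
  rw [invPerm_conj_lambda] at h1
  obtain ⟨g', hg'⟩ := h1
  have e1 : g' = g⁻¹ := by
    have := congrArg (fun p : Equiv.Perm G => p 1) hg'
    simpa using this
  subst e1
  have hcen : g⁻¹ ∈ Subgroup.center G := by
    rw [Subgroup.mem_center_iff]
    intro x
    have := congrArg (fun p : Equiv.Perm G => p x) hg'
    simp only [lambda_apply, rho_apply] at this
    simpa using this.symm
  rw [hZ, Subgroup.mem_bot] at hcen
  exact hg (by simpa using congrArg Inv.inv hcen)

lemma toPerm_conj_rho (φ : MulAut G) (g : G) :
    MulAut.toPerm G φ * rho G g * (MulAut.toPerm G φ)⁻¹ = rho G (φ g) := by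
  ext x
  simp only [Equiv.Perm.mul_apply, rho_apply, MulAut.toPerm]
  show φ (φ.toEquiv⁻¹ x * g⁻¹) = x * (φ g)⁻¹
  rw [map_mul, map_inv]
  congr 1
  exact φ.toEquiv.apply_symm_apply x

end Aux

section Main

variable {G : Type*} [Group G] (N : Subgroup (Equiv.Perm G))

/-- Restriction of the conjugation action on `λ(G)` to `N`. -/
noncomputable def ANhom (hNle : N ≤ Hol G) : ↥N →* MulAut G :=
  holA.comp (Subgroup.inclusion hNle)

/-- Restriction of the conjugation action on `ρ(G)` to `N`. -/
noncomputable def BNhom (hNle : N ≤ Hol G) : ↥N →* MulAut G :=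
  holB.comp (Subgroup.inclusion hNle)

lemma ANhom_apply (hNle : N ≤ Hol G) (n : ↥N) :
    ANhom N hNle n = holA ⟨(n : Equiv.Perm G), hNle n.2⟩ := rfl

lemma BNhom_apply (hNle : N ≤ Hol G) (n : ↥N) :
    BNhom N hNle n = holB ⟨(n : Equiv.Perm G), hNle n.2⟩ := rfl

lemma lambdaA_mem (hNle : N ≤ Hol G)
    (hNnorm : ∀ h ∈ Hol G, ∀ n ∈ N, h * n * h⁻¹ ∈ N) (n : ↥N) (g : G) :
    ANhom N hNle n g * g⁻¹ ∈ N.comap (lambda G) := by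
  rw [Subgroup.mem_comap, map_mul, map_inv, ANhom_apply, ← holA_conj]
  have h1 : lambda G g * (n : Equiv.Perm G)⁻¹ * (lambda G g)⁻¹ ∈ N :=
    hNnorm _ (lambda_mem_Hol g) _ (inv_mem n.2)
  have h2 := mul_mem n.2 h1
  have he : (n : Equiv.Perm G) * (lambda G g * (n : Equiv.Perm G)⁻¹ * (lambda G g)⁻¹)
      = ((n : Equiv.Perm G) * lambda G g * (n : Equiv.Perm G)⁻¹) * (lambda G g)⁻¹ := by
    group
  rwa [he] at h2

lemma rhoB_mem (hNle : N ≤ Hol G)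
    (hNnorm : ∀ h ∈ Hol G, ∀ n ∈ N, h * n * h⁻¹ ∈ N) (n : ↥N) (g : G) :
    BNhom N hNle n g * g⁻¹ ∈ N.comap (rho G) := by
  rw [Subgroup.mem_comap, map_mul, map_inv, BNhom_apply, ← holB_conj]
  have h1 : rho G g * (n : Equiv.Perm G)⁻¹ * (rho G g)⁻¹ ∈ N :=
    hNnorm _ (rho_mem_Hol g) _ (inv_mem n.2)
  have h2 := mul_mem n.2 h1
  have he : (n : Equiv.Perm G) * (rho G g * (n : Equiv.Perm G)⁻¹ * (rho G g)⁻¹)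
      = ((n : Equiv.Perm G) * rho G g * (n : Equiv.Perm G)⁻¹) * (rho G g)⁻¹ := by
    group
  rwa [he] at h2

/-- If `n ∈ N` and `λ(n 1) ∈ N` then `n = λ(n 1)`. -/
lemma eq_lambda_of (hsemi : ∀ n ∈ N, ∀ x : G, n x = x → n = 1) (n : ↥N)
    (h : (n : Equiv.Perm G) 1 ∈ N.comap (lambda G)) :
    (n : Equiv.Perm G) = lambda G ((n : Equiv.Perm G) 1) := by
  rw [Subgroup.mem_comap] at h
  have h2 : (lambda G ((n : Equiv.Perm G) 1))⁻¹ * (n : Equiv.Perm G) ∈ N :=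
    mul_mem (inv_mem h) n.2
  have h3 : ((lambda G ((n : Equiv.Perm G) 1))⁻¹ * (n : Equiv.Perm G)) 1 = 1 := by
    rw [Equiv.Perm.mul_apply, ← map_inv, lambda_apply]
    exact inv_mul_cancel _
  have h4 := hsemi _ h2 1 h3
  have := inv_mul_eq_one.mp h4
  exact this.symm

/-- If `n ∈ N` and `ρ(n 1) ∈ N` then `n = ρ((n 1)⁻¹)`. -/
lemma eq_rho_of (hsemi : ∀ n ∈ N, ∀ x : G, n x = x → n = 1) (n : ↥N)
    (h : (n : Equiv.Perm G) 1 ∈ N.comap (rho G)) :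
    (n : Equiv.Perm G) = rho G (((n : Equiv.Perm G) 1)⁻¹) := by
  rw [Subgroup.mem_comap] at h
  have hm : rho G (((n : Equiv.Perm G) 1)⁻¹) ∈ N := by
    rw [map_inv]; exact inv_mem h
  have h2 : (rho G (((n : Equiv.Perm G) 1)⁻¹))⁻¹ * (n : Equiv.Perm G) ∈ N :=
    mul_mem (inv_mem hm) n.2
  have h3 : ((rho G (((n : Equiv.Perm G) 1)⁻¹))⁻¹ * (n : Equiv.Perm G)) 1 = 1 := by
    rw [Equiv.Perm.mul_apply, ← map_inv, rho_apply]
    simp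
  have h4 := hsemi _ h2 1 h3
  have := inv_mul_eq_one.mp h4
  exact this.symm

/-- The map `n ↦ (n 1)⁻¹ mod K₁` as a homomorphism `N →* G ⧸ K₁`. -/
noncomputable def phi1 (hNle : N ≤ Hol G)
    (hNnorm : ∀ h ∈ Hol G, ∀ n ∈ N, h * n * h⁻¹ ∈ N)
    [hn : (N.comap (lambda G)).Normal] : ↥N →* G ⧸ N.comap (lambda G) where
  toFun n := QuotientGroup.mk (((n : Equiv.Perm G) 1)⁻¹)
  map_one' := by simp
  map_mul' n m := by
    have hval : ((n * m : ↥N) : Equiv.Perm G) 1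
        = ANhom N hNle n ((m : Equiv.Perm G) 1) * (n : Equiv.Perm G) 1 := by
      rw [Subgroup.coe_mul, Equiv.Perm.mul_apply, ANhom_apply]
      exact holA_eval ⟨(n : Equiv.Perm G), hNle n.2⟩ ((m : Equiv.Perm G) 1)
    have hmem := lambdaA_mem N hNle hNnorm n ((m : Equiv.Perm G) 1)
    have key : (((n * m : ↥N) : Equiv.Perm G) 1)⁻¹⁻¹
        * (((n : Equiv.Perm G) 1)⁻¹ * ((m : Equiv.Perm G) 1)⁻¹) ∈ N.comap (lambda G) := by
      rw [hval]
      have he : (ANhom N hNle n ((m : Equiv.Perm G) 1) * (n : Equiv.Perm G) 1)⁻¹⁻¹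
          * (((n : Equiv.Perm G) 1)⁻¹ * ((m : Equiv.Perm G) 1)⁻¹)
          = ANhom N hNle n ((m : Equiv.Perm G) 1) * ((m : Equiv.Perm G) 1)⁻¹ := by
        group
      rw [he]
      exact hmem
    exact QuotientGroup.eq.mpr key

/-- The map `n ↦ (n 1) mod K₂` as a homomorphism `N →* G ⧸ K₂`. -/
noncomputable def phi2 (hNle : N ≤ Hol G)
    (hNnorm : ∀ h ∈ Hol G, ∀ n ∈ N, h * n * h⁻¹ ∈ N)
    [hn : (N.comap (rho G)).Normal] : ↥N →* G ⧸ N.comap (rho G) where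
  toFun n := QuotientGroup.mk ((n : Equiv.Perm G) 1)
  map_one' := by simp
  map_mul' n m := by
    have hval : ((n * m : ↥N) : Equiv.Perm G) 1
        = ANhom N hNle n ((m : Equiv.Perm G) 1) * (n : Equiv.Perm G) 1 := by
      rw [Subgroup.coe_mul, Equiv.Perm.mul_apply, ANhom_apply]
      exact holA_eval ⟨(n : Equiv.Perm G), hNle n.2⟩ ((m : Equiv.Perm G) 1)
    have hmem := rhoB_mem N hNle hNnorm n ((m : Equiv.Perm G) 1)
    -- BN n (m1) * (m1)⁻¹ ∈ K₂ ; conjugate by (m1)⁻¹ and invert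
    have hmem2 : (BNhom N hNle n ((m : Equiv.Perm G) 1) * ((m : Equiv.Perm G) 1)⁻¹)⁻¹ ∈
        N.comap (rho G) := inv_mem hmem
    have hmem3 := hn.conj_mem _ hmem2 (((m : Equiv.Perm G) 1)⁻¹)
    have hB : BNhom N hNle n ((m : Equiv.Perm G) 1)
        = ((n : Equiv.Perm G) 1)⁻¹ * ANhom N hNle n ((m : Equiv.Perm G) 1)
          * ((n : Equiv.Perm G) 1) := by
      rw [BNhom_apply, ANhom_apply]
      exact holB_apply _ _
    have he : ((m : Equiv.Perm G) 1)⁻¹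
          * (BNhom N hNle n ((m : Equiv.Perm G) 1) * ((m : Equiv.Perm G) 1)⁻¹)⁻¹
          * ((m : Equiv.Perm G) 1)⁻¹⁻¹
        = (ANhom N hNle n ((m : Equiv.Perm G) 1) * (n : Equiv.Perm G) 1)⁻¹
          * ((n : Equiv.Perm G) 1 * (m : Equiv.Perm G) 1) := by
      rw [hB]
      group
    rw [he] at hmem3
    have key : (((n * m : ↥N) : Equiv.Perm G) 1)⁻¹
        * ((n : Equiv.Perm G) 1 * (m : Equiv.Perm G) 1) ∈ N.comap (rho G) := by
      rw [hval]
      exact hmem3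
    exact QuotientGroup.eq.mpr key

lemma phi1_ker (hNle : N ≤ Hol G)
    (hNnorm : ∀ h ∈ Hol G, ∀ n ∈ N, h * n * h⁻¹ ∈ N)
    (hsemi : ∀ n ∈ N, ∀ x : G, n x = x → n = 1)
    [hn : (N.comap (lambda G)).Normal] :
    (phi1 N hNle hNnorm).ker = (BNhom N hNle).ker := by
  ext n
  rw [MonoidHom.mem_ker, MonoidHom.mem_ker]
  constructor
  · intro h
    have h1 : ((n : Equiv.Perm G) 1)⁻¹ ∈ N.comap (lambda G) :=
      (QuotientGroup.eq_one_iff _).mp h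
    have h2 : (n : Equiv.Perm G) 1 ∈ N.comap (lambda G) := by
      simpa using inv_mem h1
    have h3 := eq_lambda_of N hsemi n h2
    rw [BNhom_apply]
    exact (holB_eq_one_iff _).mpr ⟨(n : Equiv.Perm G) 1, h3.symm⟩
  · intro h
    rw [BNhom_apply] at h
    obtain ⟨g, hg⟩ := (holB_eq_one_iff _).mp h
    have h1 : (n : Equiv.Perm G) 1 = g := by rw [← hg]; simp
    have h2 : ((n : Equiv.Perm G) 1)⁻¹ ∈ N.comap (lambda G) := by
      rw [Subgroup.mem_comap, h1, map_inv, hg]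
      exact inv_mem n.2
    exact (QuotientGroup.eq_one_iff _).mpr h2

lemma phi2_ker (hNle : N ≤ Hol G)
    (hNnorm : ∀ h ∈ Hol G, ∀ n ∈ N, h * n * h⁻¹ ∈ N)
    (hsemi : ∀ n ∈ N, ∀ x : G, n x = x → n = 1)
    [hn : (N.comap (rho G)).Normal] :
    (phi2 N hNle hNnorm).ker = (ANhom N hNle).ker := by
  ext n
  rw [MonoidHom.mem_ker, MonoidHom.mem_ker]
  constructor
  · intro h
    have h1 : (n : Equiv.Perm G) 1 ∈ N.comap (rho G) :=
      (QuotientGroup.eq_one_iff _).mp h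
    have h3 := eq_rho_of N hsemi n h1
    rw [ANhom_apply]
    exact (holA_eq_one_iff _).mpr ⟨((n : Equiv.Perm G) 1)⁻¹, h3.symm⟩
  · intro h
    rw [ANhom_apply] at h
    obtain ⟨s, hs⟩ := (holA_eq_one_iff _).mp h
    have h1 : (n : Equiv.Perm G) 1 = s⁻¹ := by rw [← hs]; simp
    have h2 : (n : Equiv.Perm G) 1 ∈ N.comap (rho G) := by
      rw [Subgroup.mem_comap, h1, map_inv, hs]
      exact inv_mem n.2
    exact (QuotientGroup.eq_one_iff _).mpr h2

theorem main_aux {G₀ : Type*} [Group G₀] [Nontrivial G₀] (hZ : Subgroup.center G₀ = ⊥)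
    (N : Subgroup (Equiv.Perm G₀))
    (hNle : N ≤ Hol G₀)
    (hNnorm : ∀ h ∈ Hol G₀, ∀ n ∈ N, h * n * h⁻¹ ∈ N)
    (hsemi : ∀ n ∈ N, ∀ x : G₀, n x = x → n = 1)
    (htrans : ∀ x : G₀, ∃ n : ↥N, (n : Equiv.Perm G₀) 1 = x)
    (hNl : N ≠ (lambda G₀).range)
    (hNr : N ≠ (rho G₀).range) :
    ∃ (K₁ K₂ : Subgroup G₀) (Q₁ Q₂ : Subgroup (MulAut G₀)),
      K₁ ≠ ⊥ ∧ K₁ ≠ ⊤ ∧ K₂ ≠ ⊥ ∧ K₂ ≠ ⊤ ∧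
      K₁.Characteristic ∧ K₂.Characteristic ∧
      Q₁.Normal ∧ Q₂.Normal ∧
      Subgroup.center ↥Q₁ = ⊥ ∧ Subgroup.center ↥Q₂ = ⊥ ∧
      K₁ ⊓ K₂ = ⊥ ∧ commutator G₀ ≤ K₁ ⊔ K₂ ∧
      Q₁ ⊓ Q₂ = ⊥ ∧
      (MulAut.conj : G₀ →* MulAut G₀).range ≤ Q₁ ⊔ Q₂ ∧
      Q₁ ⊔ (MulAut.conj : G₀ →* MulAut G₀).range
        = Q₂ ⊔ (MulAut.conj : G₀ →* MulAut G₀).range ∧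
      (∃ _ : K₁.Normal, Nonempty ((G₀ ⧸ K₁) ≃* ↥Q₁)) ∧
      (∃ _ : K₂.Normal, Nonempty ((G₀ ⧸ K₂) ≃* ↥Q₂)) := by
  classical
  have hK₁normal : (N.comap (lambda G₀)).Normal := by
    constructor
    intro k hk g
    rw [Subgroup.mem_comap] at hk ⊢
    rw [map_mul, map_mul, map_inv]
    exact hNnorm _ (lambda_mem_Hol g) _ hk
  have hK₂normal : (N.comap (rho G₀)).Normal := by
    constructor
    intro k hk g
    rw [Subgroup.mem_comap] at hk ⊢
    rw [map_mul, map_mul, map_inv]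
    exact hNnorm _ (rho_mem_Hol g) _ hk
  haveI := hK₁normal
  haveI := hK₂normal
  have hZ' : ∀ g : G₀, (∀ x : G₀, x * g = g * x) → g = 1 := by
    intro g hg
    have : g ∈ Subgroup.center G₀ := Subgroup.mem_center_iff.mpr hg
    rwa [hZ, Subgroup.mem_bot] at this
  -- K₁ ⊓ K₂ = ⊥
  have hK12 : N.comap (lambda G₀) ⊓ N.comap (rho G₀) = ⊥ := by
    rw [Subgroup.eq_bot_iff_forall]
    intro g hg
    obtain ⟨hg1, hg2⟩ := Subgroup.mem_inf.mp hg
    rw [Subgroup.mem_comap] at hg1 hg2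
    have h3 : lambda G₀ g * rho G₀ g ∈ N := mul_mem hg1 hg2
    have h4 : (lambda G₀ g * rho G₀ g) 1 = 1 := by simp
    have h5 := hsemi _ h3 1 h4
    apply hZ'
    intro x
    have hx := congrArg (fun p : Equiv.Perm G₀ => p x) h5
    simp only [Equiv.Perm.mul_apply, rho_apply, lambda_apply, Equiv.Perm.one_apply] at hx
    -- hx : g * (x * g⁻¹) = x
    have h6 : g * x = (g * (x * g⁻¹)) * g := by group
    rw [hx] at h6
    exact h6.symm
  -- K₁ ≠ ⊥
  have hK₁bot : N.comap (lambda G₀) ≠ ⊥ := by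
    intro hbot
    apply hNr
    have hsub : N ≤ (rho G₀).range := by
      intro p hp
      have hA1 : holA (⟨p, hNle hp⟩ : ↥(Hol G₀)) = 1 := by
        apply MulEquiv.ext
        intro g
        have hm := lambdaA_mem N hNle hNnorm ⟨p, hp⟩ g
        rw [hbot, Subgroup.mem_bot] at hm
        have h1 : ANhom N hNle ⟨p, hp⟩ g = g := mul_inv_eq_one.mp hm
        rw [ANhom_apply] at h1
        exact h1
      exact (holA_eq_one_iff _).mp hA1
    apply le_antisymm hsub
    rintro p ⟨s, rfl⟩
    obtain ⟨n, hn1⟩ := htrans s⁻¹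
    obtain ⟨t, ht⟩ := hsub n.2
    have hts : t = s := by
      have : (n : Equiv.Perm G₀) 1 = t⁻¹ := by rw [← ht]; simp
      rw [hn1] at this
      exact inv_injective this.symm
    rw [← hts, ht]
    exact n.2
  -- K₂ ≠ ⊥
  have hK₂bot : N.comap (rho G₀) ≠ ⊥ := by
    intro hbot
    apply hNl
    have hsub : N ≤ (lambda G₀).range := by
      intro p hp
      have hB1 : holB (⟨p, hNle hp⟩ : ↥(Hol G₀)) = 1 := by
        apply MulEquiv.ext
        intro g
        have hm := rhoB_mem N hNle hNnorm ⟨p, hp⟩ g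
        rw [hbot, Subgroup.mem_bot] at hm
        have h1 : BNhom N hNle ⟨p, hp⟩ g = g := mul_inv_eq_one.mp hm
        rw [BNhom_apply] at h1
        exact h1
      exact (holB_eq_one_iff _).mp hB1
    apply le_antisymm hsub
    rintro p ⟨s, rfl⟩
    obtain ⟨n, hn1⟩ := htrans s
    obtain ⟨t, ht⟩ := hsub n.2
    have hts : t = s := by
      have : (n : Equiv.Perm G₀) 1 = t := by rw [← ht]; simp
      rw [hn1] at this
      exact this.symm
    rw [← hts, ht]
    exact n.2
  -- K₁ ≠ ⊤
  have hK₁top : N.comap (lambda G₀) ≠ ⊤ := by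
    intro htop
    apply hNl
    apply le_antisymm
    · intro p hp
      have h1 : (p : Equiv.Perm G₀) 1 ∈ N.comap (lambda G₀) := by rw [htop]; trivial
      have := eq_lambda_of N hsemi ⟨p, hp⟩ h1
      exact ⟨_, this.symm⟩
    · rintro p ⟨g, rfl⟩
      have : g ∈ N.comap (lambda G₀) := by rw [htop]; trivial
      exact Subgroup.mem_comap.mp this
  -- K₂ ≠ ⊤
  have hK₂top : N.comap (rho G₀) ≠ ⊤ := by
    intro htop
    apply hNr
    apply le_antisymm
    · intro p hp
      have h1 : (p : Equiv.Perm G₀) 1 ∈ N.comap (rho G₀) := by rw [htop]; trivial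
      have := eq_rho_of N hsemi ⟨p, hp⟩ h1
      exact ⟨_, this.symm⟩
    · rintro p ⟨g, rfl⟩
      have : g ∈ N.comap (rho G₀) := by rw [htop]; trivial
      exact Subgroup.mem_comap.mp this
  -- characteristic
  have hK₁char : (N.comap (lambda G₀)).Characteristic := by
    rw [Subgroup.characteristic_iff_comap_eq]
    intro φ
    ext g
    rw [Subgroup.mem_comap, Subgroup.mem_comap, Subgroup.mem_comap]
    simp only [MulEquiv.coe_toMonoidHom]
    constructor
    · intro h
      have h2 := hNnorm _ (toPerm_mem_Hol φ⁻¹) _ h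
      have he := toPerm_conj_lambda φ⁻¹ (φ g)
      have hg : φ⁻¹ (φ g) = g := by
        show φ.symm (φ g) = g
        exact φ.symm_apply_apply g
      rw [hg] at he
      show lambda G₀ g ∈ N
      rwa [he] at h2
    · intro h
      have h2 := hNnorm _ (toPerm_mem_Hol φ) _ h
      rwa [toPerm_conj_lambda φ g] at h2
  have hK₂char : (N.comap (rho G₀)).Characteristic := by
    rw [Subgroup.characteristic_iff_comap_eq]
    intro φ
    ext g
    rw [Subgroup.mem_comap, Subgroup.mem_comap, Subgroup.mem_comap]
    simp only [MulEquiv.coe_toMonoidHom]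
    constructor
    · intro h
      have h2 := hNnorm _ (toPerm_mem_Hol φ⁻¹) _ h
      have he := toPerm_conj_rho φ⁻¹ (φ g)
      have hg : φ⁻¹ (φ g) = g := by
        show φ.symm (φ g) = g
        exact φ.symm_apply_apply g
      rw [hg] at he
      show rho G₀ g ∈ N
      rwa [he] at h2
    · intro h
      have h2 := hNnorm _ (toPerm_mem_Hol φ) _ h
      rwa [toPerm_conj_rho φ g] at h2
  -- Q normality
  have hQ₁norm : ((BNhom N hNle).range).Normal := by
    constructor
    intro ψ hψ φ
    obtain ⟨n, hn⟩ := hψ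
    have hmem : MulAut.toPerm G₀ φ * (n : Equiv.Perm G₀) * (MulAut.toPerm G₀ φ)⁻¹ ∈ N :=
      hNnorm _ (toPerm_mem_Hol φ) _ n.2
    refine ⟨⟨_, hmem⟩, ?_⟩
    rw [BNhom_apply]
    have hcoe : (⟨MulAut.toPerm G₀ φ * (n : Equiv.Perm G₀) * (MulAut.toPerm G₀ φ)⁻¹,
        hNle hmem⟩ : ↥(Hol G₀))
        = ⟨MulAut.toPerm G₀ φ, toPerm_mem_Hol φ⟩ * ⟨(n : Equiv.Perm G₀), hNle n.2⟩
          * (⟨MulAut.toPerm G₀ φ, toPerm_mem_Hol φ⟩ : ↥(Hol G₀))⁻¹ := by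
      apply Subtype.ext
      rfl
    rw [hcoe, map_mul, map_mul, map_inv, holB_toPerm, ← BNhom_apply, hn]
  have hQ₂norm : ((ANhom N hNle).range).Normal := by
    constructor
    intro ψ hψ φ
    obtain ⟨n, hn⟩ := hψ
    have hmem : MulAut.toPerm G₀ φ * (n : Equiv.Perm G₀) * (MulAut.toPerm G₀ φ)⁻¹ ∈ N :=
      hNnorm _ (toPerm_mem_Hol φ) _ n.2
    refine ⟨⟨_, hmem⟩, ?_⟩
    rw [ANhom_apply]
    have hcoe : (⟨MulAut.toPerm G₀ φ * (n : Equiv.Perm G₀) * (MulAut.toPerm G₀ φ)⁻¹,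
        hNle hmem⟩ : ↥(Hol G₀))
        = ⟨MulAut.toPerm G₀ φ, toPerm_mem_Hol φ⟩ * ⟨(n : Equiv.Perm G₀), hNle n.2⟩
          * (⟨MulAut.toPerm G₀ φ, toPerm_mem_Hol φ⟩ : ↥(Hol G₀))⁻¹ := by
      apply Subtype.ext
      rfl
    rw [hcoe, map_mul, map_mul, map_inv, holA_toPerm, ← ANhom_apply, hn]
  -- Q₁ ⊓ Q₂ = ⊥
  have hQ12 : (BNhom N hNle).range ⊓ (ANhom N hNle).range = ⊥ := by
    rw [Subgroup.eq_bot_iff_forall]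
    intro β hβ
    obtain ⟨hβ1, hβ2⟩ := Subgroup.mem_inf.mp hβ
    obtain ⟨n, hn⟩ := hβ1
    obtain ⟨m, hm⟩ := hβ2
    have hg : ∀ g : G₀, β g = g := by
      intro g
      have h1 := rhoB_mem N hNle hNnorm n g
      rw [hn] at h1
      have h2 := lambdaA_mem N hNle hNnorm m g
      rw [hm] at h2
      have h3 : β g * g⁻¹ ∈ N.comap (lambda G₀) ⊓ N.comap (rho G₀) :=
        Subgroup.mem_inf.mpr ⟨h2, h1⟩
      rw [hK12, Subgroup.mem_bot] at h3
      exact mul_inv_eq_one.mp h3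
    exact MulEquiv.ext hg
  -- decomposition of inner automorphisms
  have hAB : ∀ n : ↥N,
      ANhom N hNle n = MulAut.conj ((n : Equiv.Perm G₀) 1) * BNhom N hNle n := by
    intro n
    rw [ANhom_apply, BNhom_apply]
    exact holA_eq_conj_mul_holB _
  have hconjdec : ∀ g : G₀, ∃ n : ↥N, (n : Equiv.Perm G₀) 1 = g ∧
      MulAut.conj g = ANhom N hNle n * (BNhom N hNle n)⁻¹ := by
    intro g
    obtain ⟨n, hn⟩ := htrans g
    refine ⟨n, hn, ?_⟩
    rw [hAB n, hn]
    group
  have hInnle : (MulAut.conj : G₀ →* MulAut G₀).range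
      ≤ (BNhom N hNle).range ⊔ (ANhom N hNle).range := by
    rintro ψ ⟨g, rfl⟩
    obtain ⟨n, _, hd⟩ := hconjdec g
    rw [hd]
    exact mul_mem (Subgroup.mem_sup_right ⟨n, rfl⟩)
      (inv_mem (Subgroup.mem_sup_left ⟨n, rfl⟩))
  have hsupeq : (BNhom N hNle).range ⊔ (MulAut.conj : G₀ →* MulAut G₀).range
      = (ANhom N hNle).range ⊔ (MulAut.conj : G₀ →* MulAut G₀).range := by
    apply le_antisymm
    · apply sup_le _ le_sup_right
      rintro ψ ⟨n, rfl⟩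
      have hb : BNhom N hNle n = (MulAut.conj ((n : Equiv.Perm G₀) 1))⁻¹ * ANhom N hNle n := by
        rw [hAB n]; group
      rw [hb]
      exact mul_mem (inv_mem (Subgroup.mem_sup_right ⟨(n : Equiv.Perm G₀) 1, rfl⟩))
        (Subgroup.mem_sup_left ⟨n, rfl⟩)
    · apply sup_le _ le_sup_right
      rintro ψ ⟨n, rfl⟩
      rw [hAB n]
      exact mul_mem (Subgroup.mem_sup_right ⟨(n : Equiv.Perm G₀) 1, rfl⟩)
        (Subgroup.mem_sup_left ⟨n, rfl⟩)
  -- commuting of Q₁ and Q₂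
  have hqcomm : ∀ β ∈ (BNhom N hNle).range, ∀ γ ∈ (ANhom N hNle).range, β * γ = γ * β := by
    intro β hβ γ hγ
    have hc1 : β * γ * β⁻¹ * γ⁻¹ ∈ (BNhom N hNle).range := by
      have h1 := hQ₁norm.conj_mem _ (inv_mem hβ) γ
      have h2 := mul_mem hβ h1
      have he : β * (γ * β⁻¹ * γ⁻¹) = β * γ * β⁻¹ * γ⁻¹ := by group
      rwa [he] at h2
    have hc2 : β * γ * β⁻¹ * γ⁻¹ ∈ (ANhom N hNle).range :=
      mul_mem (hQ₂norm.conj_mem _ hγ β) (inv_mem hγ)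
    have h3 : β * γ * β⁻¹ * γ⁻¹ ∈ (BNhom N hNle).range ⊓ (ANhom N hNle).range :=
      Subgroup.mem_inf.mpr ⟨hc1, hc2⟩
    rw [hQ12, Subgroup.mem_bot] at h3
    exact mul_inv_eq_iff_eq_mul.mp (mul_inv_eq_one.mp h3)
  -- conj identity
  have hconj_conj : ∀ (φ : MulAut G₀) (g : G₀), φ * MulAut.conj g * φ⁻¹ = MulAut.conj (φ g) := by
    intro φ g
    apply MulEquiv.ext
    intro x
    show φ (MulAut.conj g (φ⁻¹ x)) = MulAut.conj (φ g) x
    rw [MulAut.conj_apply, MulAut.conj_apply, map_mul, map_mul, map_inv]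
    have hx : φ (φ⁻¹ x) = x := by
      show φ (φ.symm x) = x
      exact φ.apply_symm_apply x
    rw [hx]
  -- centralizing Inn forces identity
  have hcentral : ∀ β : MulAut G₀, (∀ g : G₀, β * MulAut.conj g = MulAut.conj g * β) → β = 1 := by
    intro β hβ
    apply MulEquiv.ext
    intro g
    show β g = g
    have h1 : MulAut.conj (β g) = MulAut.conj g := by
      rw [← hconj_conj β g, hβ g]
      group
    have h2 : ∀ x : G₀, x * (g⁻¹ * β g) = (g⁻¹ * β g) * x := by
      intro x
      have e := congrArg (fun ψ : MulAut G₀ => ψ x) h1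
      simp only [MulAut.conj_apply] at e
      have e2 : β g * x = g * x * g⁻¹ * β g := by rw [← e]; group
      have e3 : (g⁻¹ * β g) * x = g⁻¹ * (β g * x) := by group
      rw [e2] at e3
      have e4 : g⁻¹ * (g * x * g⁻¹ * β g) = x * (g⁻¹ * β g) := by group
      rw [e4] at e3
      exact e3.symm
    have h3 := hZ' _ h2
    exact (inv_mul_eq_one.mp h3).symm
  -- centers
  have hcenterQ₁ : Subgroup.center ↥((BNhom N hNle).range) = ⊥ := by
    rw [Subgroup.eq_bot_iff_forall]
    intro x hx
    have hβQ : (x : MulAut G₀) ∈ (BNhom N hNle).range := x.2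
    have hβcomm : ∀ γ ∈ (BNhom N hNle).range, (x : MulAut G₀) * γ = γ * (x : MulAut G₀) := by
      intro γ hγ
      have := Subgroup.mem_center_iff.mp hx ⟨γ, hγ⟩
      exact (congrArg Subtype.val this).symm
    have hc : ∀ g : G₀, (x : MulAut G₀) * MulAut.conj g = MulAut.conj g * (x : MulAut G₀) := by
      intro g
      obtain ⟨n, _, hd⟩ := hconjdec g
      rw [hd]
      have c1 := (hqcomm _ hβQ _ ⟨n, rfl⟩).symm
      have c2 := hβcomm ((BNhom N hNle n)⁻¹) (inv_mem ⟨n, rfl⟩)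
      calc (x : MulAut G₀) * (ANhom N hNle n * (BNhom N hNle n)⁻¹)
          = ((x : MulAut G₀) * ANhom N hNle n) * (BNhom N hNle n)⁻¹ := by group
        _ = (ANhom N hNle n * (x : MulAut G₀)) * (BNhom N hNle n)⁻¹ := by
            rw [← c1]
        _ = ANhom N hNle n * ((x : MulAut G₀) * (BNhom N hNle n)⁻¹) := by group
        _ = ANhom N hNle n * ((BNhom N hNle n)⁻¹ * (x : MulAut G₀)) := by rw [c2]
        _ = (ANhom N hNle n * (BNhom N hNle n)⁻¹) * (x : MulAut G₀) := by group
    exact Subtype.ext (hcentral _ hc)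
  have hcenterQ₂ : Subgroup.center ↥((ANhom N hNle).range) = ⊥ := by
    rw [Subgroup.eq_bot_iff_forall]
    intro x hx
    have hβQ : (x : MulAut G₀) ∈ (ANhom N hNle).range := x.2
    have hβcomm : ∀ γ ∈ (ANhom N hNle).range, (x : MulAut G₀) * γ = γ * (x : MulAut G₀) := by
      intro γ hγ
      have := Subgroup.mem_center_iff.mp hx ⟨γ, hγ⟩
      exact (congrArg Subtype.val this).symm
    have hc : ∀ g : G₀, (x : MulAut G₀) * MulAut.conj g = MulAut.conj g * (x : MulAut G₀) := by
      intro g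
      obtain ⟨n, _, hd⟩ := hconjdec g
      rw [hd]
      have c1 := hβcomm _ ⟨n, rfl⟩
      have c2 : (x : MulAut G₀) * (BNhom N hNle n)⁻¹ = (BNhom N hNle n)⁻¹ * (x : MulAut G₀) := by
        have := hqcomm _ ⟨n, rfl⟩ _ hβQ
        have hcomm : Commute (BNhom N hNle n) (x : MulAut G₀) := this
        exact (hcomm.inv_left).symm
      calc (x : MulAut G₀) * (ANhom N hNle n * (BNhom N hNle n)⁻¹)
          = ((x : MulAut G₀) * ANhom N hNle n) * (BNhom N hNle n)⁻¹ := by group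
        _ = (ANhom N hNle n * (x : MulAut G₀)) * (BNhom N hNle n)⁻¹ := by rw [c1]
        _ = ANhom N hNle n * ((x : MulAut G₀) * (BNhom N hNle n)⁻¹) := by group
        _ = ANhom N hNle n * ((BNhom N hNle n)⁻¹ * (x : MulAut G₀)) := by rw [c2]
        _ = (ANhom N hNle n * (BNhom N hNle n)⁻¹) * (x : MulAut G₀) := by group
    exact Subtype.ext (hcentral _ hc)
  -- commutator
  have hcomm : commutator G₀ ≤ N.comap (lambda G₀) ⊔ N.comap (rho G₀) := by
    rw [commutator_def, Subgroup.commutator_le]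
    intro x _ g _
    obtain ⟨n, hn1⟩ := htrans x
    have k1 := lambdaA_mem N hNle hNnorm n g
    have k2 := rhoB_mem N hNle hNnorm n g
    have hrel : ANhom N hNle n g = x * BNhom N hNle n g * x⁻¹ := by
      have h := congrArg (fun ψ : MulAut G₀ => ψ g) (hAB n)
      rw [h, hn1]
      rfl
    have heq : ⁅x, g⁆ = (x * (BNhom N hNle n g * g⁻¹)⁻¹ * x⁻¹) * (ANhom N hNle n g * g⁻¹) := by
      rw [commutatorElement_def, hrel]
      group
    rw [heq]
    exact mul_mem (Subgroup.mem_sup_right (hK₂normal.conj_mem _ (inv_mem k2) x))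
      (Subgroup.mem_sup_left k1)
  -- isomorphisms
  have hsurj1 : Function.Surjective (phi1 N hNle hNnorm) := by
    intro q
    obtain ⟨g, rfl⟩ := QuotientGroup.mk_surjective q
    obtain ⟨n, hn⟩ := htrans g⁻¹
    refine ⟨n, ?_⟩
    show QuotientGroup.mk (((n : Equiv.Perm G₀) 1)⁻¹) = _
    rw [hn, inv_inv]
  have hsurj2 : Function.Surjective (phi2 N hNle hNnorm) := by
    intro q
    obtain ⟨g, rfl⟩ := QuotientGroup.mk_surjective q
    obtain ⟨n, hn⟩ := htrans g
    refine ⟨n, ?_⟩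
    show QuotientGroup.mk ((n : Equiv.Perm G₀) 1) = _
    rw [hn]
  have iso1 : Nonempty ((G₀ ⧸ N.comap (lambda G₀)) ≃* ↥((BNhom N hNle).range)) := by
    have e1 := QuotientGroup.quotientKerEquivOfSurjective _ hsurj1
    have e2 := QuotientGroup.quotientKerEquivOfSurjective _
      (MonoidHom.rangeRestrict_surjective (BNhom N hNle))
    have hkk : (phi1 N hNle hNnorm).ker = (BNhom N hNle).rangeRestrict.ker := by
      rw [MonoidHom.ker_rangeRestrict]
      exact phi1_ker N hNle hNnorm hsemi
    exact ⟨(e1.symm.trans (QuotientGroup.quotientMulEquivOfEq hkk)).trans e2⟩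
  have iso2 : Nonempty ((G₀ ⧸ N.comap (rho G₀)) ≃* ↥((ANhom N hNle).range)) := by
    have e1 := QuotientGroup.quotientKerEquivOfSurjective _ hsurj2
    have e2 := QuotientGroup.quotientKerEquivOfSurjective _
      (MonoidHom.rangeRestrict_surjective (ANhom N hNle))
    have hkk : (phi2 N hNle hNnorm).ker = (ANhom N hNle).rangeRestrict.ker := by
      rw [MonoidHom.ker_rangeRestrict]
      exact phi2_ker N hNle hNnorm hsemi
    exact ⟨(e1.symm.trans (QuotientGroup.quotientMulEquivOfEq hkk)).trans e2⟩
  exact ⟨N.comap (lambda G₀), N.comap (rho G₀), (BNhom N hNle).range, (ANhom N hNle).range,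
    hK₁bot, hK₁top, hK₂bot, hK₂top, hK₁char, hK₂char, hQ₁norm, hQ₂norm, hcenterQ₁, hcenterQ₂,
    hK12, hcomm, hQ12, hInnle, hsupeq, ⟨hK₁normal, iso1⟩, ⟨hK₂normal, iso2⟩⟩

end Main

/-- If `G` is a non-trivial centerless group and `T(G)` is not cyclic of
order `2`, then there exist non-trivial proper characteristic subgroups `K₁, K₂` of `G`
and centerless normal subgroups `Q₁, Q₂` of `Aut(G)` with `K₁ ∩ K₂ = 1`,
`[G,G] ⊆ K₁K₂`, `Q₁ ∩ Q₂ = 1`, `Inn(G) ⊆ Q₁Q₂`, `Q₁·Inn(G) = Q₂·Inn(G)`,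
`G/K₁ ≅ Q₁` and `G/K₂ ≅ Q₂`. (Products of the normal subgroups involved are
expressed by joins `⊔`.) -/
theorem exists_subgroups_of_T_not_cyclic_of_order_two
    (G : Type*) [Group G] [Nontrivial G] (hZ : Subgroup.center G = ⊥)
    (hT : ¬(IsCyclic (THol G) ∧ Nat.card (THol G) = 2)) :
    ∃ (K₁ K₂ : Subgroup G) (Q₁ Q₂ : Subgroup (MulAut G)),
      K₁ ≠ ⊥ ∧ K₁ ≠ ⊤ ∧ K₂ ≠ ⊥ ∧ K₂ ≠ ⊤ ∧
      K₁.Characteristic ∧ K₂.Characteristic ∧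
      Q₁.Normal ∧ Q₂.Normal ∧
      Subgroup.center ↥Q₁ = ⊥ ∧ Subgroup.center ↥Q₂ = ⊥ ∧
      K₁ ⊓ K₂ = ⊥ ∧ commutator G ≤ K₁ ⊔ K₂ ∧
      Q₁ ⊓ Q₂ = ⊥ ∧
      (MulAut.conj : G →* MulAut G).range ≤ Q₁ ⊔ Q₂ ∧
      Q₁ ⊔ (MulAut.conj : G →* MulAut G).range
        = Q₂ ⊔ (MulAut.conj : G →* MulAut G).range ∧
      (∃ _ : K₁.Normal, Nonempty ((G ⧸ K₁) ≃* ↥Q₁)) ∧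
      (∃ _ : K₂.Normal, Nonempty ((G ⧸ K₂) ≃* ↥Q₂)) := by

  classical
  haveI : Fact (Nat.Prime 2) := ⟨Nat.prime_two⟩
  have hcard : Nat.card (THol G) ≠ 2 := by
    intro h
    exact hT ⟨isCyclic_of_prime_card h, h⟩
  have hinvH := invPerm_not_mem_Hol hZ
  set a : THol G := QuotientGroup.mk (1 : ↥(NHol G)) with ha
  set b : THol G := QuotientGroup.mk (⟨invPerm G, invPerm_mem_NHol⟩ : ↥(NHol G)) with hb
  have hab : a ≠ b := by
    intro h
    have h2 := QuotientGroup.eq.mp h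
    rw [inv_one, one_mul, Subgroup.mem_subgroupOf] at h2
    exact hinvH h2
  obtain ⟨t, hta, htb⟩ : ∃ t : THol G, t ≠ a ∧ t ≠ b := by
    by_contra hcon
    push_neg at hcon
    apply hcard
    rw [Nat.card_eq_two_iff]
    refine ⟨a, b, hab, ?_⟩
    apply Set.eq_univ_of_forall
    intro t
    by_cases h : t = a
    · exact Set.mem_insert_iff.mpr (Or.inl h)
    · exact Set.mem_insert_iff.mpr (Or.inr (hcon t h))
  obtain ⟨θ', rfl⟩ := QuotientGroup.mk_surjective t
  have hθN : (θ' : Equiv.Perm G) ∈ NHol G := θ'.2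
  have hθHol : (θ' : Equiv.Perm G) ∉ Hol G := by
    intro hmem
    apply hta
    rw [ha]
    exact QuotientGroup.eq.mpr (by rw [mul_one]; exact Subgroup.mem_subgroupOf.mpr (inv_mem hmem))
  have hθinv : (invPerm G)⁻¹ * (θ' : Equiv.Perm G) ∉ Hol G := by
    intro hmem
    apply htb
    rw [hb]
    apply QuotientGroup.eq.mpr
    apply Subgroup.mem_subgroupOf.mpr
    have h3 := inv_mem hmem
    rw [mul_inv_rev, inv_inv] at h3
    exact h3
  set θ : Equiv.Perm G := (θ' : Equiv.Perm G) with hθ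
  set N : Subgroup (Equiv.Perm G) :=
    Subgroup.map (MulAut.conj θ).toMonoidHom (lambda G).range with hN
  have hmemN : ∀ p : Equiv.Perm G,
      p ∈ N ↔ ∃ g : G, θ * lambda G g * θ⁻¹ = p := by
    intro p
    rw [hN, Subgroup.mem_map]
    constructor
    · rintro ⟨x, ⟨g, rfl⟩, hx⟩
      exact ⟨g, hx⟩
    · rintro ⟨g, hg⟩
      exact ⟨lambda G g, ⟨g, rfl⟩, hg⟩
  have hNle : N ≤ Hol G := by
    intro p hp
    rw [hmemN] at hp
    obtain ⟨g, rfl⟩ := hp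
    exact (Subgroup.mem_normalizer_iff (H := Hol G).mp hθN _).mp (lambda_mem_Hol g)
  have hNnorm : ∀ h ∈ Hol G, ∀ n ∈ N, h * n * h⁻¹ ∈ N := by
    intro h hh n hn
    rw [hmemN] at hn
    obtain ⟨g, rfl⟩ := hn
    rw [hmemN]
    have hconj : θ⁻¹ * h * θ ∈ Hol G := by
      apply (Subgroup.mem_normalizer_iff (H := Hol G).mp hθN _).mpr
      have he : θ * (θ⁻¹ * h * θ) * θ⁻¹ = h := by group
      rw [he]
      exact hh
    obtain ⟨g', hg'⟩ := (Subgroup.mem_normalizer_iff (H := (lambda G).range).mp hconj (lambda G g)).mp ⟨g, rfl⟩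
    refine ⟨g', ?_⟩
    rw [hg']
    group
  have hsemi : ∀ n ∈ N, ∀ x : G, n x = x → n = 1 := by
    intro n hn x hnx
    rw [hmemN] at hn
    obtain ⟨g, rfl⟩ := hn
    have h1 : (θ * lambda G g * θ⁻¹) x = θ (g * θ⁻¹ x) := by
      simp [Equiv.Perm.mul_apply]
    rw [h1] at hnx
    have h2 : θ (g * θ⁻¹ x) = θ (θ⁻¹ x) := by
      rw [hnx, Equiv.Perm.apply_inv_self]
    have h3 : g * θ⁻¹ x = θ⁻¹ x := θ.injective h2
    have h4 : g = 1 := by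
      have : g * θ⁻¹ x = 1 * θ⁻¹ x := by rw [one_mul]; exact h3
      exact mul_right_cancel this
    rw [h4, map_one]
    group
  have htrans : ∀ x : G, ∃ n : ↥N, (n : Equiv.Perm G) 1 = x := by
    intro x
    have hmem : θ * lambda G (θ⁻¹ x * (θ⁻¹ 1)⁻¹) * θ⁻¹ ∈ N :=
      (hmemN _).mpr ⟨_, rfl⟩
    refine ⟨⟨_, hmem⟩, ?_⟩
    show (θ * lambda G (θ⁻¹ x * (θ⁻¹ 1)⁻¹) * θ⁻¹) 1 = x
    simp only [Equiv.Perm.mul_apply, lambda_apply]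
    rw [inv_mul_cancel_right]
    exact θ.apply_inv_self x
  have hNl : N ≠ (lambda G).range := by
    intro hNeq
    apply hθHol
    show θ ∈ Subgroup.normalizer (((lambda G).range : Subgroup (Equiv.Perm G)) : Set (Equiv.Perm G))
    rw [Subgroup.mem_normalizer_iff]
    intro p
    constructor
    · rintro ⟨g, rfl⟩
      rw [← hNeq]
      exact (hmemN _).mpr ⟨g, rfl⟩
    · intro hp
      rw [← hNeq, hmemN] at hp
      obtain ⟨g, hg⟩ := hp
      exact ⟨g, mul_left_cancel (mul_right_cancel hg)⟩
  have hNr : N ≠ (rho G).range := by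
    intro hNeq
    apply hθinv
    have hII : (invPerm G)⁻¹ = invPerm G := invPerm_inv
    rw [hII]
    show invPerm G * θ ∈ Subgroup.normalizer (((lambda G).range : Subgroup (Equiv.Perm G)) : Set (Equiv.Perm G))
    rw [Subgroup.mem_normalizer_iff]
    intro p
    constructor
    · rintro ⟨g, rfl⟩
      have h1 : θ * lambda G g * θ⁻¹ ∈ (rho G).range := by
        rw [← hNeq]
        exact (hmemN _).mpr ⟨g, rfl⟩
      obtain ⟨s, hs⟩ := h1
      refine ⟨s, ?_⟩
      have he : (invPerm G * θ) * lambda G g * (invPerm G * θ)⁻¹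
          = invPerm G * (θ * lambda G g * θ⁻¹) * (invPerm G)⁻¹ := by group
      rw [he, ← hs, invPerm_conj_rho]
    · intro hp
      obtain ⟨g', hg'⟩ := hp
      have h2 : (invPerm G * θ) * p * (invPerm G * θ)⁻¹ = lambda G g' := hg'.symm
      have h3 : θ * p * θ⁻¹ = (invPerm G)⁻¹ * lambda G g' * invPerm G := by
        rw [← h2]
        group
      have h5 : (invPerm G)⁻¹ * lambda G g' * invPerm G = rho G g' := by
        rw [← invPerm_conj_lambda g', hII]
      rw [h5] at h3
      have h4 : θ * p * θ⁻¹ ∈ N := by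
        rw [hNeq]
        exact ⟨g', h3.symm⟩
      rw [hmemN] at h4
      obtain ⟨g, hg⟩ := h4
      exact ⟨g, mul_left_cancel (mul_right_cancel hg)⟩
  exact main_aux hZ N hNle hNnorm hsemi htrans hNl hNr
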